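/- Let f: 2^N → R_+ be a monotone submodular function on a finite ground set N = {1,...,n} with all marginal values in [0,1]. Let X_1,...,X_n be independent {0,1}-valued random variables, R = {i : X_i = 1}, and μ = E[f(R)]. Then for any δ ∈ (0,1), Pr[f(R) ≤ (1-δ)μ] ≤ e^{-μδ²/2}. -/

import Mathlib

open Finset

namespace S6

variable {n : ℕ}

noncomputable def w (p : Fin n → ℝ) (s S : Finset (Fin n)) : ℝ :=
  (∏ i ∈ S, p i) * ∏ i ∈ s \ S, (1 - p i)

noncomputable def E (p : Fin n → ℝ) (s : Finset (Fin n)) (g : Finset (Fin n) → ℝ) : ℝ :=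
  ∑ S ∈ s.powerset, w p s S * g S

lemma w_nonneg {p : Fin n → ℝ} (hp : ∀ i, p i ∈ Set.Icc (0:ℝ) 1) (s S : Finset (Fin n)) :
    0 ≤ w p s S := by
  apply mul_nonneg
  · exact Finset.prod_nonneg fun i _ => (hp i).1
  · exact Finset.prod_nonneg fun i _ => by linarith [(hp i).2]

lemma E_empty (p : Fin n → ℝ) (g : Finset (Fin n) → ℝ) : E p ∅ g = g ∅ := by
  simp [E, w]

lemma E_insert {p : Fin n → ℝ} {a : Fin n} {s : Finset (Fin n)} (ha : a ∉ s)
    (g : Finset (Fin n) → ℝ) :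
    E p (insert a s) g = (1 - p a) * E p s g + p a * E p s (fun S => g (insert a S)) := by
  classical
  rw [E, Finset.powerset_insert, Finset.sum_union]
  · congr 1
    · rw [E, Finset.mul_sum]
      apply Finset.sum_congr rfl
      intro S hS
      rw [Finset.mem_powerset] at hS
      have haS : a ∉ S := fun h => ha (hS h)
      have h1 : insert a s \ S = insert a (s \ S) := by
        rw [Finset.insert_sdiff_of_notMem _ haS]
      rw [w, w, h1, Finset.prod_insert (by simp [ha])]
      ring
    · rw [Finset.sum_image, E, Finset.mul_sum]
      · apply Finset.sum_congr rfl
        intro S hS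
        rw [Finset.mem_powerset] at hS
        have haS : a ∉ S := fun h => ha (hS h)
        have h1 : insert a s \ insert a S = s \ S := by
          ext x
          simp only [Finset.mem_sdiff, Finset.mem_insert]
          constructor
          · rintro ⟨hx1 | hx1, hx2⟩
            · exact absurd (Or.inl hx1) hx2
            · exact ⟨hx1, fun h => hx2 (Or.inr h)⟩
          · rintro ⟨hx1, hx2⟩
            exact ⟨Or.inr hx1, fun h => h.elim (fun h => ha (h ▸ hx1)) hx2⟩
        rw [w, w, h1, Finset.prod_insert haS]
        ring
      · intro S hS T hT hST
        rw [Finset.mem_coe, Finset.mem_powerset] at hS hT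
        have : ∀ U : Finset (Fin n), U ⊆ s → (insert a U).erase a = U := by
          intro U hU
          rw [Finset.erase_insert (fun h => ha (hU h))]
        rw [← this S hS, ← this T hT, hST]
  · rw [Finset.disjoint_left]
    intro S hS hS2
    rw [Finset.mem_powerset] at hS
    rw [Finset.mem_image] at hS2
    obtain ⟨T, _, rfl⟩ := hS2
    exact ha (hS (Finset.mem_insert_self a T))

lemma E_one {p : Fin n → ℝ} (hp : ∀ i, p i ∈ Set.Icc (0:ℝ) 1) (s : Finset (Fin n)) :
    E p s (fun _ => 1) = 1 := by
  classical
  induction s using Finset.induction_on with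
  | empty => simp [E_empty]
  | insert _ _ ha ih => rw [E_insert ha]; rw [ih]; ring

lemma E_mono {p : Fin n → ℝ} (hp : ∀ i, p i ∈ Set.Icc (0:ℝ) 1) {s : Finset (Fin n)}
    {g h : Finset (Fin n) → ℝ} (hgh : ∀ S, S ⊆ s → g S ≤ h S) :
    E p s g ≤ E p s h := by
  apply Finset.sum_le_sum
  intro S hS
  rw [Finset.mem_powerset] at hS
  exact mul_le_mul_of_nonneg_left (hgh S hS) (w_nonneg hp s S)

lemma E_nonneg {p : Fin n → ℝ} (hp : ∀ i, p i ∈ Set.Icc (0:ℝ) 1) {s : Finset (Fin n)}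
    {g : Finset (Fin n) → ℝ} (hg : ∀ S, S ⊆ s → 0 ≤ g S) : 0 ≤ E p s g := by
  apply Finset.sum_nonneg
  intro S hS
  rw [Finset.mem_powerset] at hS
  exact mul_nonneg (w_nonneg hp s S) (hg S hS)

lemma E_affine {p : Fin n → ℝ} (hp : ∀ i, p i ∈ Set.Icc (0:ℝ) 1) (s : Finset (Fin n))
    (c x y : ℝ) (g h : Finset (Fin n) → ℝ) :
    E p s (fun S => c + x * g S + y * h S) = c + x * E p s g + y * E p s h := by
  have hw : ∑ S ∈ s.powerset, w p s S = 1 := by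
    have := E_one hp s
    simpa [E] using this
  simp only [E]
  calc ∑ S ∈ s.powerset, w p s S * (c + x * g S + y * h S)
      = (∑ S ∈ s.powerset, w p s S) * c + x * ∑ S ∈ s.powerset, w p s S * g S
        + y * ∑ S ∈ s.powerset, w p s S * h S := by
        rw [Finset.sum_mul, Finset.mul_sum, Finset.mul_sum, ← Finset.sum_add_distrib,
          ← Finset.sum_add_distrib]
        exact Finset.sum_congr rfl fun S _ => by ring
    _ = _ := by rw [hw]; ring

lemma harris {p : Fin n → ℝ} (hp : ∀ i, p i ∈ Set.Icc (0:ℝ) 1) {s : Finset (Fin n)}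
    {g h : Finset (Fin n) → ℝ}
    (hg : ∀ S T, S ⊆ T → T ⊆ s → g S ≤ g T)
    (hh : ∀ S T, S ⊆ T → T ⊆ s → h T ≤ h S) :
    E p s (fun S => g S * h S) ≤ E p s g * E p s h := by
  classical
  induction s using Finset.induction_on generalizing g h with
  | empty => simp [E_empty]
  | @insert a s ha ih =>
    have hsub : s ⊆ insert a s := Finset.subset_insert a s
    have hg0 : ∀ S T, S ⊆ T → T ⊆ s → g S ≤ g T := fun S T h1 h2 => hg S T h1 (h2.trans hsub)
    have hh0 : ∀ S T, S ⊆ T → T ⊆ s → h T ≤ h S := fun S T h1 h2 => hh S T h1 (h2.trans hsub)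
    have hg1 : ∀ S T, S ⊆ T → T ⊆ s → g (insert a S) ≤ g (insert a T) := fun S T h1 h2 =>
      hg _ _ (Finset.insert_subset_insert a h1) (Finset.insert_subset_insert a h2)
    have hh1 : ∀ S T, S ⊆ T → T ⊆ s → h (insert a T) ≤ h (insert a S) := fun S T h1 h2 =>
      hh _ _ (Finset.insert_subset_insert a h1) (Finset.insert_subset_insert a h2)
    have hC0 := ih hg0 hh0
    have hC1 := ih hg1 hh1
    have hA : E p s g ≤ E p s (fun S => g (insert a S)) :=
      E_mono hp fun S hS => hg S (insert a S) (Finset.subset_insert a S)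
        (Finset.insert_subset_insert a hS)
    have hB : E p s (fun S => h (insert a S)) ≤ E p s h :=
      E_mono hp fun S hS => hh S (insert a S) (Finset.subset_insert a S)
        (Finset.insert_subset_insert a hS)
    rw [E_insert ha, E_insert ha, E_insert ha]
    have hpa := hp a
    nlinarith [mul_nonneg (mul_nonneg hpa.1 (by linarith [hpa.2] : (0:ℝ) ≤ 1 - p a))
      (mul_nonneg (sub_nonneg.2 hA) (sub_nonneg.2 hB)), hpa.1, hpa.2]

lemma mgf {p : Fin n → ℝ} (hp : ∀ i, p i ∈ Set.Icc (0:ℝ) 1)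
    (f : Finset (Fin n) → ℝ)
    (hnonneg : ∀ S, 0 ≤ f S)
    (hmono : ∀ S T, S ⊆ T → f S ≤ f T)
    (hsub : ∀ A B, f (A ∪ B) + f (A ∩ B) ≤ f A + f B)
    (hmarg : ∀ (S : Finset (Fin n)) (i : Fin n), f (insert i S) - f S ∈ Set.Icc (0:ℝ) 1)
    {l : ℝ} (hl : 0 ≤ l) (s : Finset (Fin n)) :
    E p s (fun S => Real.exp (-l * f S)) ≤ Real.exp ((Real.exp (-l) - 1) * E p s f) := by
  classical
  induction s using Finset.induction_on with
  | empty =>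
    rw [E_empty, E_empty]
    apply Real.exp_le_exp.2
    have h1 := Real.add_one_le_exp (-l)
    nlinarith [hnonneg ∅]
  | @insert a s ha ih =>
    set c : ℝ := Real.exp (-l) - 1 with hc
    have hc0 : c ≤ 0 := by
      have : Real.exp (-l) ≤ 1 := Real.exp_le_one_iff.2 (by linarith)
      linarith
    set g1 : Finset (Fin n) → ℝ := fun S => Real.exp (-l * f S) with hg1def
    set g2 : Finset (Fin n) → ℝ := fun S => Real.exp (-l * (f (insert a S) - f S)) with hg2def
    -- antitone marginal
    have hmarg_anti : ∀ S T : Finset (Fin n), S ⊆ T → T ⊆ s →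
        f (insert a T) - f T ≤ f (insert a S) - f S := by
      intro S T hST hTs
      have haT : a ∉ T := fun h => ha (hTs h)
      have hu : insert a S ∪ T = insert a T := by
        rw [Finset.insert_union, Finset.union_eq_right.2 hST]
      have hi : insert a S ∩ T = S := by
        ext x
        simp only [Finset.mem_inter, Finset.mem_insert]
        constructor
        · rintro ⟨hx1 | hx1, hx2⟩
          · exact absurd (hx1 ▸ hx2) haT
          · exact hx1
        · intro hx
          exact ⟨Or.inr hx, hST hx⟩
      have := hsub (insert a S) T
      rw [hu, hi] at this
      linarith
    -- Harris
    have hharris : E p s (fun S => g2 S * g1 S) ≤ E p s g2 * E p s g1 := by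
      apply harris hp
      · intro S T hST hTs
        exact Real.exp_le_exp.2 (by nlinarith [hmarg_anti S T hST hTs])
      · intro S T hST _
        exact Real.exp_le_exp.2 (by nlinarith [hmono S T hST])
    have hsplit : E p s (fun S => Real.exp (-l * f (insert a S)))
        = E p s (fun S => g2 S * g1 S) := by
      apply Finset.sum_congr rfl
      intro S _
      congr 1
      show Real.exp (-l * f (insert a S)) = Real.exp (-l * (f (insert a S) - f S)) * Real.exp (-l * f S)
      rw [← Real.exp_add]
      congr 1
      ring
    -- pointwise convexity bound on g2
    have hg2pt : ∀ S : Finset (Fin n), S ⊆ s →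
        g2 S ≤ 1 + c * f (insert a S) + (-c) * f S := by
      intro S _
      have hd := hmarg S a
      obtain ⟨hd0, hd1⟩ := hd
      set d : ℝ := f (insert a S) - f S with hdd
      have := convexOn_exp.2 (Set.mem_univ (-l)) (Set.mem_univ (0:ℝ)) hd0
        (by linarith : (0:ℝ) ≤ 1 - d) (by ring)
      simp only [smul_eq_mul, mul_zero, add_zero, Real.exp_zero, mul_one] at this
      have he : -l * d = d * -l := by ring
      calc g2 S = Real.exp (d * -l) := by rw [hg2def]; simp only [← hdd, he]
        _ ≤ d * Real.exp (-l) + (1 - d) := this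
        _ = 1 + c * f (insert a S) + (-c) * f S := by rw [hdd, hc]; ring
    have hg2bound : E p s g2 ≤ 1 + c * E p s (fun S => f (insert a S)) + (-c) * E p s f := by
      calc E p s g2 ≤ E p s (fun S => 1 + c * f (insert a S) + (-c) * f S) := E_mono hp hg2pt
        _ = _ := E_affine hp s 1 c (-c) _ _
    -- numbers
    set pa : ℝ := p a with hpa
    obtain ⟨hpa0, hpa1⟩ := hp a
    set A : ℝ := E p s g1 with hA
    set μ0 : ℝ := E p s f with hμ0
    set μ1 : ℝ := E p s (fun S => f (insert a S)) with hμ1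
    have hAnn : 0 ≤ A := E_nonneg hp fun S _ => (Real.exp_pos _).le
    have hg2nn : 0 ≤ E p s g2 := E_nonneg hp fun S _ => (Real.exp_pos _).le
    rw [E_insert ha, E_insert ha, hsplit]
    have step1 : (1 - pa) * A + pa * E p s (fun S => g2 S * g1 S)
        ≤ A * (1 - pa + pa * E p s g2) := by
      have h2 : pa * E p s (fun S => g2 S * g1 S) ≤ pa * (E p s g2 * A) :=
        mul_le_mul_of_nonneg_left hharris hpa0
      nlinarith [h2]
    have step2 : A * (1 - pa + pa * E p s g2) ≤ A * (1 + pa * (c * (μ1 - μ0))) := by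
      apply mul_le_mul_of_nonneg_left _ hAnn
      have : E p s g2 ≤ 1 + c * (μ1 - μ0) := by
        calc E p s g2 ≤ 1 + c * μ1 + (-c) * μ0 := hg2bound
          _ = 1 + c * (μ1 - μ0) := by ring
      nlinarith [mul_le_mul_of_nonneg_left this hpa0]
    have step3 : A * (1 + pa * (c * (μ1 - μ0))) ≤ A * Real.exp (pa * (c * (μ1 - μ0))) := by
      apply mul_le_mul_of_nonneg_left _ hAnn
      have := Real.add_one_le_exp (pa * (c * (μ1 - μ0)))
      linarith
    have step4 : A * Real.exp (pa * (c * (μ1 - μ0)))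
        ≤ Real.exp (c * μ0) * Real.exp (pa * (c * (μ1 - μ0))) :=
      mul_le_mul_of_nonneg_right ih (Real.exp_pos _).le
    calc (1 - pa) * A + pa * E p s (fun S => g2 S * g1 S)
        ≤ Real.exp (c * μ0) * Real.exp (pa * (c * (μ1 - μ0))) :=
          le_trans step1 (le_trans step2 (le_trans step3 step4))
      _ = Real.exp (c * ((1 - pa) * μ0 + pa * μ1)) := by
          rw [← Real.exp_add]; congr 1; ring

lemma exp_neg_le_quad {x : ℝ} (hx : 0 ≤ x) : Real.exp (-x) ≤ 1 - x + x^2/2 := by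
  have key : 1 ≤ (1 - x + x^2/2) * Real.exp x := by
    have hder : ∀ y : ℝ, HasDerivAt (fun t : ℝ => (1 - t + t^2/2) * Real.exp t)
        (y^2/2 * Real.exp y) y := by
      intro y
      have h1 : HasDerivAt (fun t : ℝ => 1 - t + t^2/2) (0 - 1 + 2 * y^1 / 2) y :=
        (((hasDerivAt_const y (1:ℝ)).sub (hasDerivAt_id y)).add
          ((hasDerivAt_pow 2 y).div_const 2))
      have := h1.mul (Real.hasDerivAt_exp y)
      exact this.congr_deriv (by ring)
    have hmono : MonotoneOn (fun t : ℝ => (1 - t + t^2/2) * Real.exp t) (Set.Ici 0) := by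
      apply monotoneOn_of_deriv_nonneg (convex_Ici 0)
      · exact ((continuous_const.sub continuous_id).add
          ((continuous_pow 2).div_const 2)).mul Real.continuous_exp |>.continuousOn
      · exact fun y _ => (hder y).differentiableAt.differentiableWithinAt
      · intro y _
        rw [(hder y).deriv]
        positivity
    have := hmono (Set.self_mem_Ici) (Set.mem_Ici.2 hx) hx
    simpa using this
  have hepos := Real.exp_pos x
  rw [Real.exp_neg]
  rw [inv_le_iff_one_le_mul₀ hepos]
  nlinarith [key]

lemma E_const_mul (p : Fin n → ℝ) (s : Finset (Fin n)) (K : ℝ) (g : Finset (Fin n) → ℝ) :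
    E p s (fun S => K * g S) = K * E p s g := by
  simp only [E, Finset.mul_sum]
  exact Finset.sum_congr rfl fun S _ => by ring

lemma chernoff_comb {p : Fin n → ℝ} (hp : ∀ i, p i ∈ Set.Icc (0:ℝ) 1)
    (f : Finset (Fin n) → ℝ)
    (hnonneg : ∀ S, 0 ≤ f S)
    (hmono : ∀ S T, S ⊆ T → f S ≤ f T)
    (hsub : ∀ A B, f (A ∪ B) + f (A ∩ B) ≤ f A + f B)
    (hmarg : ∀ (S : Finset (Fin n)) (i : Fin n), f (insert i S) - f S ∈ Set.Icc (0:ℝ) 1)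
    {δ : ℝ} (hδ : δ ∈ Set.Ioo (0:ℝ) 1) :
    ∑ S ∈ Finset.univ.powerset.filter
        (fun S => f S ≤ (1 - δ) * E p Finset.univ f), w p Finset.univ S
      ≤ Real.exp (-(E p Finset.univ f * δ^2)/2) := by
  classical
  obtain ⟨hδ0, hδ1⟩ := hδ
  set μ : ℝ := E p Finset.univ f with hμ
  have hμ0 : 0 ≤ μ := E_nonneg hp fun S _ => hnonneg S
  set K : ℝ := Real.exp (δ * ((1-δ) * μ)) with hK
  have h1 : ∑ S ∈ Finset.univ.powerset.filter (fun S => f S ≤ (1 - δ) * μ), w p Finset.univ S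
      = E p Finset.univ (fun S => if f S ≤ (1-δ)*μ then 1 else 0) := by
    rw [E, Finset.sum_filter]
    exact Finset.sum_congr rfl fun S _ => by
      by_cases h : f S ≤ (1-δ)*μ <;> simp [h]
  rw [h1]
  have h2 : E p Finset.univ (fun S => if f S ≤ (1-δ)*μ then 1 else 0)
      ≤ E p Finset.univ (fun S => K * Real.exp (-δ * f S)) := by
    apply E_mono hp
    intro S _
    by_cases h : f S ≤ (1-δ)*μ
    · simp only [h, if_true]
      rw [hK, ← Real.exp_add]
      have hxx : 0 ≤ δ * ((1-δ) * μ) + -δ * f S := by nlinarith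
      linarith [Real.add_one_le_exp (δ * ((1-δ) * μ) + -δ * f S)]
    · simp only [h, if_false]
      positivity
  have h3 : E p Finset.univ (fun S => K * Real.exp (-δ * f S))
      = K * E p Finset.univ (fun S => Real.exp (-δ * f S)) := E_const_mul _ _ _ _
  have h4 := mgf hp f hnonneg hmono hsub hmarg hδ0.le (Finset.univ : Finset (Fin n))
  have hq : Real.exp (-δ) ≤ 1 - δ + δ^2/2 := exp_neg_le_quad hδ0.le
  calc E p Finset.univ (fun S => if f S ≤ (1-δ)*μ then 1 else 0)
      ≤ K * E p Finset.univ (fun S => Real.exp (-δ * f S)) := by rw [← h3]; exact h2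
    _ ≤ K * Real.exp ((Real.exp (-δ) - 1) * μ) := by
        apply mul_le_mul_of_nonneg_left h4 (Real.exp_pos _).le
    _ = Real.exp (δ * ((1-δ) * μ) + (Real.exp (-δ) - 1) * μ) := by rw [hK, ← Real.exp_add]
    _ ≤ Real.exp (-(μ * δ^2)/2) := by
        apply Real.exp_le_exp.2
        nlinarith [mul_le_mul_of_nonneg_right hq hμ0]

end S6

open MeasureTheory ProbabilityTheory Finset

theorem stmt_6 {Ω : Type*} [MeasurableSpace Ω] (P : Measure Ω) [IsProbabilityMeasure P]
    {n : ℕ} (f : Finset (Fin n) → ℝ)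
    (hnonneg : ∀ S, 0 ≤ f S)
    (hmono : ∀ S T, S ⊆ T → f S ≤ f T)
    (hsub : ∀ A B, f (A ∪ B) + f (A ∩ B) ≤ f A + f B)
    (hmarg : ∀ (S : Finset (Fin n)) (i : Fin n),
      f (insert i S) - f S ∈ Set.Icc (0:ℝ) 1)
    (X : Fin n → Ω → ℝ)
    (hmeas : ∀ i, Measurable (X i))
    (h01 : ∀ i ω, X i ω = 0 ∨ X i ω = 1)
    (hindep : iIndepFun X P)
    (R : Ω → Finset (Fin n))
    (hR : ∀ ω, R ω = Finset.univ.filter fun i => X i ω = 1)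
    (m : ℝ) (hm : m = ∫ ω, f (R ω) ∂P)
    (δ : ℝ) (hδ : δ ∈ Set.Ioo (0:ℝ) 1) :
    (P {ω | f (R ω) ≤ (1 - δ) * m}).toReal ≤ Real.exp (-(m * δ ^ 2) / 2) := by
  classical
  set p : Fin n → ℝ := fun i => (P (X i ⁻¹' {1})).toReal with hpdef
  have hp : ∀ i, p i ∈ Set.Icc (0:ℝ) 1 := by
    intro i
    refine ⟨ENNReal.toReal_nonneg, ?_⟩
    simpa using ENNReal.toReal_mono (by simp) (prob_le_one (μ := P) (s := X i ⁻¹' {1}))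
  have hRset : ∀ S : Finset (Fin n),
      {ω | R ω = S} = ⋂ i, X i ⁻¹' {if i ∈ S then (1:ℝ) else 0} := by
    intro S
    ext ω
    simp only [Set.mem_setOf_eq, Set.mem_iInter, Set.mem_preimage, Set.mem_singleton_iff]
    constructor
    · intro h i
      by_cases hi : i ∈ S
      · rw [if_pos hi]
        have : i ∈ R ω := h ▸ hi
        rw [hR ω] at this
        exact (Finset.mem_filter.1 this).2
      · rw [if_neg hi]
        have : i ∉ R ω := h ▸ hi
        rw [hR ω] at this
        rcases h01 i ω with h0 | h1
        · exact h0
        · exact absurd (Finset.mem_filter.2 ⟨Finset.mem_univ i, h1⟩) this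
    · intro h
      rw [hR ω]
      ext i
      rw [Finset.mem_filter]
      constructor
      · rintro ⟨-, h1⟩
        by_contra hi
        have h2 := h i
        rw [if_neg hi] at h2
        rw [h2] at h1
        norm_num at h1
      · intro hi
        exact ⟨Finset.mem_univ i, by rw [h i, if_pos hi]⟩
  have hmeasR : ∀ S : Finset (Fin n), MeasurableSet {ω | R ω = S} := by
    intro S
    rw [hRset S]
    exact MeasurableSet.iInter fun i => hmeas i (measurableSet_singleton _)
  have hcompl : ∀ i, X i ⁻¹' {(0:ℝ)} = (X i ⁻¹' {1})ᶜ := by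
    intro i
    ext ω
    simp only [Set.mem_preimage, Set.mem_singleton_iff, Set.mem_compl_iff]
    constructor
    · intro h0 h1
      rw [h0] at h1
      norm_num at h1
    · intro h1
      rcases h01 i ω with h | h
      · exact h
      · exact absurd h h1
  have hzero : ∀ i, (P (X i ⁻¹' {(0:ℝ)})).toReal = 1 - p i := by
    intro i
    rw [hcompl i, measure_compl (hmeas i (measurableSet_singleton _)) (measure_ne_top _ _),
      measure_univ, ENNReal.toReal_sub_of_le (prob_le_one) (by simp)]
    simp [hpdef]
  have hprob : ∀ S : Finset (Fin n),
      (P {ω | R ω = S}).toReal = S6.w p Finset.univ S := by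
    intro S
    have hmul := hindep.measure_inter_preimage_eq_mul Finset.univ
      (sets := fun i => {if i ∈ S then (1:ℝ) else 0}) (fun i _ => measurableSet_singleton _)
    have hbint : (⋂ i ∈ (Finset.univ : Finset (Fin n)), X i ⁻¹' {if i ∈ S then (1:ℝ) else 0})
        = ⋂ i, X i ⁻¹' {if i ∈ S then (1:ℝ) else 0} := by simp
    rw [hRset S, ← hbint, hmul, ENNReal.toReal_prod]
    have hsplit : ∏ i ∈ Finset.univ, (P (X i ⁻¹' {if i ∈ S then (1:ℝ) else 0})).toReal
        = (∏ i ∈ Finset.univ \ S, (P (X i ⁻¹' {if i ∈ S then (1:ℝ) else 0})).toReal)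
          * ∏ i ∈ S, (P (X i ⁻¹' {if i ∈ S then (1:ℝ) else 0})).toReal :=
      (Finset.prod_sdiff (Finset.subset_univ S)).symm
    rw [hsplit]
    have h1 : ∏ i ∈ S, (P (X i ⁻¹' {if i ∈ S then (1:ℝ) else 0})).toReal = ∏ i ∈ S, p i :=
      Finset.prod_congr rfl fun i hi => by rw [if_pos hi]
    have h2 : ∏ i ∈ Finset.univ \ S, (P (X i ⁻¹' {if i ∈ S then (1:ℝ) else 0})).toReal
        = ∏ i ∈ Finset.univ \ S, (1 - p i) :=
      Finset.prod_congr rfl fun i hi => by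
        rw [if_neg (Finset.mem_sdiff.1 hi).2]
        exact hzero i
    rw [h1, h2, S6.w]
    ring
  have hint : ∀ g : Finset (Fin n) → ℝ,
      ∫ ω, g (R ω) ∂P = S6.E p Finset.univ g := by
    intro g
    have hrep : (fun ω => g (R ω)) = fun ω => ∑ S ∈ (Finset.univ : Finset (Fin n)).powerset,
        Set.indicator {ω' | R ω' = S} (fun _ => g S) ω := by
      funext ω
      have : ∀ S ∈ (Finset.univ : Finset (Fin n)).powerset,
          Set.indicator {ω' | R ω' = S} (fun _ => g S) ω = if R ω = S then g S else 0 := by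
        intro S _
        rw [Set.indicator_apply]
        rfl
      rw [Finset.sum_congr rfl this, Finset.sum_ite_eq]
      rw [if_pos (Finset.mem_powerset.2 (Finset.subset_univ _))]
    rw [hrep, integral_finset_sum]
    · rw [S6.E]
      apply Finset.sum_congr rfl
      intro S _
      rw [integral_indicator_const (g S) (hmeasR S), smul_eq_mul, measureReal_def, hprob S]
    · intro S _
      exact (integrable_const (g S)).indicator (hmeasR S)
  have hmE : m = S6.E p Finset.univ f := by rw [hm, hint f]
  rw [hmE]
  have hev : {ω | f (R ω) ≤ (1 - δ) * S6.E p Finset.univ f}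
      = ⋃ S ∈ (Finset.univ : Finset (Fin n)).powerset.filter
          (fun S => f S ≤ (1 - δ) * S6.E p Finset.univ f), {ω | R ω = S} := by
    ext ω
    simp only [Set.mem_setOf_eq, Set.mem_iUnion, Finset.mem_filter, Finset.mem_powerset]
    constructor
    · intro h
      exact ⟨R ω, ⟨Finset.subset_univ _, h⟩, rfl⟩
    · rintro ⟨S, ⟨-, hfS⟩, hRS⟩
      exact hRS ▸ hfS
  have hdisj : (↑((Finset.univ : Finset (Fin n)).powerset.filter
      (fun S => f S ≤ (1 - δ) * S6.E p Finset.univ f)) : Set (Finset (Fin n))).PairwiseDisjoint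
      (fun S => {ω | R ω = S}) := by
    intro S _ T _ hST
    rw [Function.onFun, Set.disjoint_left]
    intro ω hω hω'
    exact hST (hω.symm.trans hω')
  rw [hev, measure_biUnion_finset hdisj (fun S _ => hmeasR S),
    ENNReal.toReal_sum (fun S _ => measure_ne_top P _)]
  calc ∑ S ∈ (Finset.univ : Finset (Fin n)).powerset.filter
        (fun S => f S ≤ (1 - δ) * S6.E p Finset.univ f), (P {ω | R ω = S}).toReal
      = ∑ S ∈ (Finset.univ : Finset (Fin n)).powerset.filter
        (fun S => f S ≤ (1 - δ) * S6.E p Finset.univ f), S6.w p Finset.univ S :=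
        Finset.sum_congr rfl fun S _ => hprob S
    _ ≤ _ := S6.chernoff_comb hp f hnonneg hmono hsub hmarg hδ
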